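/- For strongly positive formulas, C-expansion commutes with multi-abstraction up to β-reduction: if C = A₁ ⊃ ⋯ ⊃ Aₙ ⊃ X is strongly positive in X, U is a term context with U : B ⊢^Γ D, and Γ, x₁:A₁, …, xₙ:Aₙ ⊢ t : B, then the C-expansion ⟨C⟩_X{U} applied to λx₁…xₙ.t β-reduces to λx₁…xₙ.U[t], both of type A₁⊃⋯⊃Aₙ⊃D. -/

import Mathlib

/-!
Statement 0: every universal polynomial formula enjoys the instantiation
overflow property in atomic System F (NI²_at).
-/

/-- Formulas of second-order propositional logic: variables, ⊃, ∀. -/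
inductive Fm : Type
  | var : ℕ → Fm
  | imp : Fm → Fm → Fm
  | all : ℕ → Fm → Fm
deriving DecidableEq

namespace Fm

/-- `Free X A`: the variable `X` occurs free in `A`. -/
def Free (X : ℕ) : Fm → Prop
  | var Y => X = Y
  | imp A B => Free X A ∨ Free X B
  | all Y A => X ≠ Y ∧ Free X A

/-- Substitution of `C` for the free occurrences of `X`. -/
def subst (X : ℕ) (C : Fm) : Fm → Fm
  | var Y => if X = Y then C else var Y
  | imp A B => imp (subst X C A) (subst X C B)
  | all Y A => if X = Y then all Y A else all Y (subst X C A)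

/-- `C` is substitutable (free) for `X` in the given formula (no capture). -/
def FreeFor (C : Fm) (X : ℕ) : Fm → Prop
  | var _ => True
  | imp A B => FreeFor C X A ∧ FreeFor C X B
  | all Y A => (¬ Free X (all Y A)) ∨ (¬ Free Y C ∧ FreeFor C X A)

end Fm

/-- Natural deduction for second-order propositional logic.  When
`atomic = true` the witness of ∀-elimination must be a variable
(this is the system `NI²_at`, atomic System F). -/
inductive Deriv (atomic : Bool) : Set Fm → Fm → Prop
  | ax {Γ A} : A ∈ Γ → Deriv atomic Γ A
  | impI {Γ A B} : Deriv atomic (insert A Γ) B → Deriv atomic Γ (.imp A B)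
  | impE {Γ A B} : Deriv atomic Γ (.imp A B) → Deriv atomic Γ A → Deriv atomic Γ B
  | allI {Γ X A} : Deriv atomic Γ A → (∀ B ∈ Γ, ¬ Fm.Free X B) →
      Deriv atomic Γ (.all X A)
  | allE {Γ X A C} : Deriv atomic Γ (.all X A) → Fm.FreeFor C X A →
      (atomic = true → ∃ Y, C = Fm.var Y) →
      Deriv atomic Γ (Fm.subst X C A)

/-- Terms of System F (named variables; term variables and type variables
are drawn from separate copies of ℕ). -/
inductive Tm : Type
  | var : ℕ → Tm
  | lam : ℕ → Tm → Tm
  | app : Tm → Tm → Tm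
  | tlam : ℕ → Tm → Tm
  | tapp : Tm → Fm → Tm
deriving DecidableEq

namespace Tm

/-- Substitution of the term `u` for the term variable `x`. -/
def subst (x : ℕ) (u : Tm) : Tm → Tm
  | var z => if z = x then u else var z
  | lam z t => if z = x then lam z t else lam z (subst x u t)
  | app t v => app (subst x u t) (subst x u v)
  | tlam X t => tlam X (subst x u t)
  | tapp t B => tapp (subst x u t) B

/-- Substitution of the type `B` for the type variable `X` in a term. -/
def tsubst (X : ℕ) (B : Fm) : Tm → Tm
  | var z => var z
  | lam z t => lam z (tsubst X B t)
  | app t v => app (tsubst X B t) (tsubst X B v)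
  | tlam Y t => if Y = X then tlam Y t else tlam Y (tsubst X B t)
  | tapp t C => tapp (tsubst X B t) (Fm.subst X B C)

end Tm

/-- Lookup in a typing context (most recent declaration first). -/
def lookupVar (x : ℕ) : List (ℕ × Fm) → Option Fm
  | [] => none
  | (y, A) :: Γ => if x = y then some A else lookupVar x Γ

/-- Typing for System F (full ∀E). -/
inductive HasType : List (ℕ × Fm) → Tm → Fm → Prop
  | var {Γ x A} : lookupVar x Γ = some A → HasType Γ (.var x) A
  | lam {Γ x A B t} : HasType ((x, A) :: Γ) t B → HasType Γ (.lam x t) (.imp A B)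
  | app {Γ A B t u} : HasType Γ t (.imp A B) → HasType Γ u A →
      HasType Γ (.app t u) B
  | tlam {Γ X A t} : HasType Γ t A → (∀ p ∈ Γ, ¬ Fm.Free X p.2) →
      HasType Γ (.tlam X t) (.all X A)
  | tapp {Γ X A t} (B : Fm) : HasType Γ t (.all X A) → Fm.FreeFor B X A →
      HasType Γ (.tapp t B) (Fm.subst X B A)

/-- One-step β-reduction (⊃β and ∀β), closed under congruence. -/
inductive Step : Tm → Tm → Prop
  | beta (x : ℕ) (t u : Tm) : Step (.app (.lam x t) u) (Tm.subst x u t)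
  | tbeta (X : ℕ) (t : Tm) (B : Fm) : Step (.tapp (.tlam X t) B) (Tm.tsubst X B t)
  | congLam (x : ℕ) {t t'} : Step t t' → Step (.lam x t) (.lam x t')
  | congAppL {t t' u} : Step t t' → Step (.app t u) (.app t' u)
  | congAppR {t u u'} : Step u u' → Step (.app t u) (.app t u')
  | congTlam (X : ℕ) {t t'} : Step t t' → Step (.tlam X t) (.tlam X t')
  | congTapp {t t'} (B : Fm) : Step t t' → Step (.tapp t B) (.tapp t' B)

/-- Many-step β-reduction. -/
def BetaStar : Tm → Tm → Prop := Relation.ReflTransGen Step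

/-- One-hole term contexts. -/
inductive Ctx : Type
  | hole : Ctx
  | lam : ℕ → Ctx → Ctx
  | appL : Ctx → Tm → Ctx
  | appR : Tm → Ctx → Ctx
  | tlam : ℕ → Ctx → Ctx
  | tapp : Ctx → Fm → Ctx

namespace Ctx

/-- Filling the hole of a context with a term. -/
def fill : Ctx → Tm → Tm
  | hole, t => t
  | lam x U, t => .lam x (fill U t)
  | appL U u, t => .app (fill U t) u
  | appR u U, t => .app u (fill U t)
  | tlam X U, t => .tlam X (fill U t)
  | tapp U B, t => .tapp (fill U t) B

/-- The free term variables of a context. -/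
def fvC : Ctx → Set ℕ
  | hole => ∅
  | lam x U => fvC U \ {x}
  | appL U u => fvC U ∪ tmFV u
  | appR u U => tmFV u ∪ fvC U
  | tlam _ U => fvC U
  | tapp U _ => fvC U
where
  /-- free term variables of a term -/
  tmFV : Tm → Set ℕ
    | .var x => {x}
    | .lam x t => tmFV t \ {x}
    | .app t u => tmFV t ∪ tmFV u
    | .tlam _ t => tmFV t
    | .tapp t _ => tmFV t

end Ctx

/-- `A₁ ⊃ ⋯ ⊃ Aₙ ⊃ B`. -/
def impList : List Fm → Fm → Fm
  | [], B => B
  | A :: As, B => .imp A (impList As B)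

/-- Iterated λ-abstraction over a list of variables. -/
def lamList : List ℕ → Tm → Tm
  | [], t => t
  | x :: xs, t => .lam x (lamList xs t)

/-- Iterated application to a list of arguments. -/
def appList : Tm → List Tm → Tm
  | t, [] => t
  | t, u :: us => appList (.app t u) us

/-! ### Auxiliary lemmas -/

theorem subst_var_self (x : ℕ) : ∀ t, Tm.subst x (.var x) t = t := by
  intro t
  induction t with
  | var z => by_cases h : z = x <;> simp [Tm.subst, h]
  | lam z s ih => by_cases h : z = x <;> simp [Tm.subst, h, ih]
  | app s v ih1 ih2 => simp [Tm.subst, ih1, ih2]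
  | tlam Y s ih => simp [Tm.subst, ih]
  | tapp s C ih => simp [Tm.subst, ih]

theorem step_fill (U : Ctx) {t t' : Tm} (h : Step t t') :
    Step (U.fill t) (U.fill t') := by
  induction U with
  | hole => exact h
  | lam x V ih => exact .congLam x ih
  | appL V u ih => exact .congAppL ih
  | appR u V ih => exact .congAppR ih
  | tlam Y V ih => exact .congTlam Y ih
  | tapp V C ih => exact .congTapp C ih

theorem betaStar_fill (U : Ctx) {t t' : Tm} (h : BetaStar t t') :
    BetaStar (U.fill t) (U.fill t') :=
  Relation.ReflTransGen.lift U.fill (fun _ _ hs => step_fill U hs) _ _ h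

theorem betaStar_lamList (xs : List ℕ) {t t' : Tm} (h : BetaStar t t') :
    BetaStar (lamList xs t) (lamList xs t') := by
  induction xs with
  | nil => exact h
  | cons x xs ih =>
    exact Relation.ReflTransGen.lift (p := Step) (Tm.lam x) (fun _ _ hs => Step.congLam x hs) _ _ ih

theorem step_appList (us : List Tm) : ∀ {f f' : Tm},
    Step f f' → Step (appList f us) (appList f' us) := by
  induction us with
  | nil => intro _ _ h; exact h
  | cons u us ih => intro f f' h; exact ih (.congAppL h)

theorem red_appList : ∀ (xs : List ℕ) (t : Tm),
    BetaStar (appList (lamList xs t) (xs.map Tm.var)) t := by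
  intro xs
  induction xs with
  | nil => intro t; exact .refl
  | cons x xs ih =>
    intro t
    have h1 : Step (Tm.app (.lam x (lamList xs t)) (.var x)) (lamList xs t) := by
      have := Step.beta x (lamList xs t) (.var x)
      rwa [subst_var_self] at this
    show BetaStar (appList (Tm.app (.lam x (lamList xs t)) (.var x)) (xs.map Tm.var)) t
    exact Relation.ReflTransGen.head (step_appList _ h1) (ih t)

theorem lookupVar_append (x : ℕ) : ∀ (L Γ : List (ℕ × Fm)),
    lookupVar x (L ++ Γ) = (lookupVar x L).or (lookupVar x Γ) := by
  intro L
  induction L with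
  | nil => intro Γ; simp [lookupVar]
  | cons p L ih =>
    intro Γ
    obtain ⟨y, A⟩ := p
    simp only [List.cons_append, lookupVar]
    split
    · rfl
    · exact ih Γ

theorem hasType_ctxEq : ∀ {Γ t A}, HasType Γ t A → ∀ Γ',
    (∀ x, lookupVar x Γ' = lookupVar x Γ) → (∀ p ∈ Γ', p ∈ Γ) → HasType Γ' t A := by
  intro Γ t A h
  induction h with
  | var h => intro Γ' hl _; exact .var ((hl _).trans h)
  | @lam Γ x A B s _ ih =>
    intro Γ' hl hm
    refine .lam (ih ((x, A) :: Γ') ?_ ?_)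
    · intro y
      simp only [lookupVar]
      split
      · rfl
      · exact hl y
    · intro p hp
      rcases List.mem_cons.mp hp with h | h
      · exact List.mem_cons.mpr (Or.inl h)
      · exact List.mem_cons.mpr (Or.inr (hm p h))
  | app _ _ ih1 ih2 => intro Γ' hl hm; exact .app (ih1 Γ' hl hm) (ih2 Γ' hl hm)
  | tlam _ hX ih =>
    intro Γ' hl hm
    exact .tlam (ih Γ' hl hm) (fun p hp => hX p (hm p hp))
  | tapp C _ hff ih => intro Γ' hl hm; exact .tapp C (ih Γ' hl hm) hff

theorem lookup_zip_none : ∀ (xs : List ℕ) (As : List Fm) (x : ℕ), x ∉ xs →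
    lookupVar x (xs.zip As) = none := by
  intro xs
  induction xs with
  | nil => intro As x _; simp [lookupVar]
  | cons y xs ih =>
    intro As x hx
    cases As with
    | nil => simp [lookupVar]
    | cons A As =>
      simp only [List.zip_cons_cons, lookupVar]
      rw [if_neg (by simp at hx; exact hx.1)]
      exact ih As x (by simp at hx; exact hx.2)

theorem lookup_zip : ∀ (xs : List ℕ) (As : List Fm) (Γ : List (ℕ × Fm)),
    xs.Nodup → xs.length = As.length →
    ∀ p ∈ xs.zip As, lookupVar p.1 (xs.zip As ++ Γ) = some p.2 := by
  intro xs
  induction xs with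
  | nil => intro As Γ _ _ p hp; simp at hp
  | cons x xs ih =>
    intro As Γ hnd hlen p hp
    cases As with
    | nil => simp at hp
    | cons A As =>
      simp only [List.zip_cons_cons, List.mem_cons] at hp
      rcases hp with rfl | hp
      · simp [lookupVar]
      · obtain ⟨a, b⟩ := p
        have hmem : a ∈ xs := (List.of_mem_zip hp).1
        have hne : a ≠ x := by
          intro h; exact (List.nodup_cons.mp hnd).1 (h ▸ hmem)
        simp only [List.zip_cons_cons, List.cons_append, lookupVar, if_neg hne]
        exact ih As Γ (List.nodup_cons.mp hnd).2 (by simpa using hlen) (a, b) hp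

theorem hasType_appList {B : Fm} : ∀ (xs : List ℕ) (As : List Fm)
    (Δ : List (ℕ × Fm)) (f : Tm),
    xs.length = As.length →
    (∀ p ∈ xs.zip As, lookupVar p.1 Δ = some p.2) →
    HasType Δ f (impList As B) → HasType Δ (appList f (xs.map Tm.var)) B := by
  intro xs
  induction xs with
  | nil =>
    intro As Δ f hlen _ hf
    cases As with
    | nil => exact hf
    | cons A As => simp at hlen
  | cons x xs ih =>
    intro As Δ f hlen hlk hf
    cases As with
    | nil => simp at hlen
    | cons A As =>
      have hx : lookupVar x Δ = some A := hlk (x, A) (by simp)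
      have happ : HasType Δ (.app f (.var x)) (impList As B) := .app hf (.var hx)
      exact ih As Δ _ (by simpa using hlen)
        (fun p hp => hlk p (by simp [hp])) happ

theorem hasType_lamList {D : Fm} : ∀ (xs : List ℕ) (As : List Fm)
    (Γ : List (ℕ × Fm)) (s : Tm),
    xs.Nodup → xs.length = As.length → HasType (xs.zip As ++ Γ) s D →
    HasType Γ (lamList xs s) (impList As D) := by
  intro xs
  induction xs with
  | nil =>
    intro As Γ s _ hlen h
    cases As with
    | nil => exact h
    | cons A As => simp at hlen
  | cons x xs ih =>
    intro As Γ s hnd hlen h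
    cases As with
    | nil => simp at hlen
    | cons A As =>
      have hx : x ∉ xs := (List.nodup_cons.mp hnd).1
      refine .lam (ih As ((x, A) :: Γ) s (List.nodup_cons.mp hnd).2
        (by simpa using hlen) (hasType_ctxEq h _ ?_ ?_))
      · intro y
        have hc : ((x :: xs).zip (A :: As) ++ Γ) = (x, A) :: (xs.zip As ++ Γ) := by
          simp
        rw [hc, lookupVar_append]
        by_cases hyx : y = x
        · subst hyx
          rw [lookup_zip_none xs As y hx]
          simp [lookupVar, Option.or]
        · rw [show lookupVar y ((x, A) :: (xs.zip As ++ Γ)) = lookupVar y (xs.zip As ++ Γ)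
            from by simp [lookupVar, hyx], lookupVar_append]
          congr 1
          simp [lookupVar, hyx]
      · intro p hp
        simp only [List.zip_cons_cons, List.cons_append, List.mem_cons,
          List.mem_append] at *
        tauto

theorem hasType_dup {B : Fm} {t : Tm} (L Γ : List (ℕ × Fm))
    (h : HasType (L ++ Γ) t B) : HasType (L ++ (L ++ Γ)) t B := by
  refine hasType_ctxEq h _ ?_ ?_
  · intro y
    rw [lookupVar_append, lookupVar_append]
    cases lookupVar y L <;> rfl
  · intro p hp
    simp only [List.mem_append] at *
    tauto

/-- C-expansion commutes with multi-abstraction up to β-reduction:  for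
`C = A₁⊃⋯⊃Aₙ⊃X` strongly positive in `X` (i.e. `X` not free in the `Aᵢ`),
a context `U : B ⊢^Γ D` and a term `t` with `Γ, x₁:A₁,…,xₙ:Aₙ ⊢ t : B`,
the C-expansion `⟨C⟩_X{U}` applied to `λx₁…xₙ.t`, namely
`λx₁…xₙ.U[(λx₁…xₙ.t) x₁ ⋯ xₙ]`, β-reduces to `λx₁…xₙ.U[t]`, and both
terms have type `A₁⊃⋯⊃Aₙ⊃D`. -/
theorem cexpansion_commutes (X : ℕ) (As : List Fm) (hsp : ∀ A ∈ As, ¬ Fm.Free X A)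
    (Γ : List (ℕ × Fm)) (B D : Fm) (U : Ctx) (t : Tm) (xs : List ℕ)
    (hlen : xs.length = As.length) (hnd : xs.Nodup)
    (hfresh : ∀ x ∈ xs, x ∉ Ctx.fvC U ∧ lookupVar x Γ = none)
    (hU : ∀ (Δ : List (ℕ × Fm)) (s : Tm), (∀ p ∈ Δ, p.1 ∉ Ctx.fvC U) →
      HasType (Δ ++ Γ) s B → HasType (Δ ++ Γ) (Ctx.fill U s) D)
    (ht : HasType (xs.zip As ++ Γ) t B) :
    BetaStar
        (lamList xs (Ctx.fill U (appList (lamList xs t) (xs.map Tm.var))))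
        (lamList xs (Ctx.fill U t)) ∧
      HasType Γ (lamList xs (Ctx.fill U (appList (lamList xs t) (xs.map Tm.var))))
        (impList As D) ∧
      HasType Γ (lamList xs (Ctx.fill U t)) (impList As D) := by
  have hfvU : ∀ p ∈ xs.zip As, p.1 ∉ Ctx.fvC U := by
    intro p hp
    obtain ⟨a, b⟩ := p
    exact (hfresh a (List.of_mem_zip hp).1).1
  -- typing of the contractum
  have ht2 : HasType (xs.zip As ++ Γ) (Ctx.fill U t) D := hU _ t hfvU ht
  have hty2 : HasType Γ (lamList xs (Ctx.fill U t)) (impList As D) :=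
    hasType_lamList xs As Γ _ hnd hlen ht2
  -- typing of the redex
  have htdup : HasType (xs.zip As ++ (xs.zip As ++ Γ)) t B := hasType_dup _ _ ht
  have hlam : HasType (xs.zip As ++ Γ) (lamList xs t) (impList As B) :=
    hasType_lamList xs As _ _ hnd hlen htdup
  have happ : HasType (xs.zip As ++ Γ) (appList (lamList xs t) (xs.map Tm.var)) B :=
    hasType_appList xs As _ _ hlen (lookup_zip xs As Γ hnd hlen) hlam
  have ht1 : HasType (xs.zip As ++ Γ)
      (Ctx.fill U (appList (lamList xs t) (xs.map Tm.var))) D :=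
    hU _ _ hfvU happ
  have hty1 : HasType Γ
      (lamList xs (Ctx.fill U (appList (lamList xs t) (xs.map Tm.var))))
      (impList As D) :=
    hasType_lamList xs As Γ _ hnd hlen ht1
  exact ⟨betaStar_lamList xs (betaStar_fill U (red_appList xs t)), hty1, hty2⟩
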